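/- For a binary-input discrete memoryless channel W with finite output alphabet satisfying W(y|0)+W(y|1) > 0 for every y, one has 1 - I(W) ≥ φ(Z(W)), where φ(u) = H((1-√(1-u²))/2). -/

import Mathlib

open Real

noncomputable def binEnt (q : ℝ) : ℝ := -(q * Real.logb 2 q) - (1 - q) * Real.logb 2 (1 - q)

noncomputable def Bh (q : ℝ) : ℝ := 2 * Real.sqrt (q * (1 - q))

noncomputable def phi (u : ℝ) : ℝ := binEnt ((1 - Real.sqrt (1 - u ^ 2)) / 2)
variable {Y : Type*} [Fintype Y]

noncomputable def symCap (W : Fin 2 → Y → ℝ) : ℝ :=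
  ∑ y, ∑ x : Fin 2,
    (1/2) * W x y * Real.logb 2 (W x y / ((1/2) * W 0 y + (1/2) * W 1 y))

noncomputable def bhat (W : Fin 2 → Y → ℝ) : ℝ := ∑ y, Real.sqrt (W 0 y * W 1 y)


lemma hasDerivAt_F {x : ℝ} (h1x : (0:ℝ) < 1 + x) (h2x : (0:ℝ) < 1 - x) :
    HasDerivAt (fun x : ℝ => Real.log (1 + x) - Real.log (1 - x) - 2 * x)
      (1 / (1 + x) - (-1) / (1 - x) - 2) x := by
  have d1 : HasDerivAt (fun y : ℝ => Real.log (1 + y)) (1 / (1 + x)) x := by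
    simpa using ((hasDerivAt_const x (1:ℝ)).add (hasDerivAt_id x)).log h1x.ne'
  have d2 : HasDerivAt (fun y : ℝ => Real.log (1 - y)) ((-1) / (1 - x)) x := by
    simpa using ((hasDerivAt_const x (1:ℝ)).sub (hasDerivAt_id x)).log h2x.ne'
  have d3 : HasDerivAt (fun y : ℝ => 2 * y) 2 x := by
    simpa using (hasDerivAt_id x).const_mul (2:ℝ)
  exact (d1.sub d2).sub d3

-- artanh inequality: 2g ≤ log(1+g) - log(1-g) for g ∈ [0,1)
lemma two_mul_le_log_div {g : ℝ} (h0 : 0 ≤ g) (h1 : g < 1) :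
    2 * g ≤ Real.log (1 + g) - Real.log (1 - g) := by
  set F : ℝ → ℝ := fun x => Real.log (1 + x) - Real.log (1 - x) - 2 * x with hF
  have key : MonotoneOn F (Set.Icc 0 g) := by
    apply monotoneOn_of_deriv_nonneg (convex_Icc 0 g)
    · apply ContinuousOn.sub
      apply ContinuousOn.sub
      · refine (continuousOn_const.add continuousOn_id).log (fun x hx => ?_)
        simp only [Set.mem_Icc, id, Pi.add_apply] at hx ⊢
        nlinarith [hx.1, hx.2]
      · refine (continuousOn_const.sub continuousOn_id).log (fun x hx => ?_)
        simp only [Set.mem_Icc, id, Pi.sub_apply] at hx ⊢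
        nlinarith [hx.1, hx.2]
      · exact continuousOn_const.mul continuousOn_id
    · rw [interior_Icc]
      intro x hx
      have h1x : (0:ℝ) < 1 + x := by nlinarith [hx.1, hx.2]
      have h2x : (0:ℝ) < 1 - x := by nlinarith [hx.2]
      exact ((hasDerivAt_F h1x h2x).differentiableAt).differentiableWithinAt
    · rw [interior_Icc]
      intro x hx
      have h1x : (0:ℝ) < 1 + x := by nlinarith [hx.1, hx.2]
      have h2x : (0:ℝ) < 1 - x := by nlinarith [hx.2]
      rw [(hasDerivAt_F h1x h2x).deriv]
      have e : 1 / (1 + x) - (-1) / (1 - x) - 2 = 2 * x^2 / ((1+x)*(1-x)) := by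
        field_simp; ring
      rw [e]; positivity
  have h0g : (0:ℝ) ∈ Set.Icc (0:ℝ) g := by constructor <;> simp [h0]
  have hgg : g ∈ Set.Icc (0:ℝ) g := by constructor <;> simp [h0]
  have := key h0g hgg h0
  simp only [hF] at this
  simp at this
  linarith

lemma binEnt_eq (q : ℝ) : binEnt q = (-(q * Real.log q) - (1 - q) * Real.log (1 - q)) / Real.log 2 := by
  unfold binEnt Real.logb; ring

lemma hasDerivAt_binEnt {q : ℝ} (h0 : 0 < q) (h1 : q < 1) :
    HasDerivAt binEnt ((Real.log (1 - q) - Real.log q) / Real.log 2) q := by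
  have h2 : (0:ℝ) < 1 - q := by linarith
  have d1 : HasDerivAt (fun x : ℝ => x * Real.log x) (Real.log q + 1) q :=
    Real.hasDerivAt_mul_log h0.ne'
  have d2 : HasDerivAt (fun x : ℝ => (1 - x) * Real.log (1 - x)) (-(Real.log (1 - q) + 1)) q := by
    have inner : HasDerivAt (fun x : ℝ => 1 - x) (-1) q := by
      simpa [Pi.sub_def] using (hasDerivAt_const q (1:ℝ)).sub (hasDerivAt_id q)
    have := (Real.hasDerivAt_mul_log h2.ne').comp q inner
    simpa [Function.comp_def] using this
  have : HasDerivAt (fun x : ℝ => (-(x * Real.log x) - (1 - x) * Real.log (1 - x)) / Real.log 2)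
      ((-(Real.log q + 1) - (-(Real.log (1 - q) + 1))) / Real.log 2) q :=
    ((d1.neg).sub d2).div_const _
  have e : (fun x : ℝ => (-(x * Real.log x) - (1 - x) * Real.log (1 - x)) / Real.log 2) = binEnt := by
    funext x; rw [binEnt_eq]
  rw [e] at this
  convert this using 1; ring

noncomputable def phiD (u : ℝ) : ℝ :=
  u * (Real.log (1 + Real.sqrt (1 - u ^ 2)) - Real.log u) * (Real.sqrt (1 - u ^ 2))⁻¹ / Real.log 2

lemma sqrt_facts {u : ℝ} (h0 : 0 < u) (h1 : u < 1) :
    0 < Real.sqrt (1 - u ^ 2) ∧ Real.sqrt (1 - u ^ 2) < 1 ∧ Real.sqrt (1 - u ^ 2) ^ 2 = 1 - u ^ 2 := by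
  have hpos : (0:ℝ) < 1 - u ^ 2 := by nlinarith
  refine ⟨Real.sqrt_pos.2 hpos, ?_, Real.sq_sqrt hpos.le⟩
  have := Real.sqrt_lt_sqrt (by linarith) (show 1 - u^2 < 1 by nlinarith)
  simpa using this

lemma hasDerivAt_sqrt_one_sub_sq {u : ℝ} (h0 : 0 < u) (h1 : u < 1) :
    HasDerivAt (fun x : ℝ => Real.sqrt (1 - x ^ 2)) (-u / Real.sqrt (1 - u ^ 2)) u := by
  obtain ⟨hg, hg1, hg2⟩ := sqrt_facts h0 h1
  have inner : HasDerivAt (fun x : ℝ => 1 - x ^ 2) (-(2 * u)) u := by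
    simpa [Pi.sub_def] using (hasDerivAt_const u (1:ℝ)).sub (hasDerivAt_pow 2 u)
  have := inner.sqrt (by nlinarith : (1 - u ^ 2) ≠ 0)
  convert this using 1
  field_simp

lemma hasDerivAt_phi {u : ℝ} (h0 : 0 < u) (h1 : u < 1) :
    HasDerivAt phi (phiD u) u := by
  obtain ⟨hg, hg1, hg2⟩ := sqrt_facts h0 h1
  set g := Real.sqrt (1 - u ^ 2) with hgdef
  have hq0 : 0 < (1 - g) / 2 := by linarith
  have hq1 : (1 - g) / 2 < 1 := by linarith
  have dq : HasDerivAt (fun x : ℝ => (1 - Real.sqrt (1 - x ^ 2)) / 2) (-(-u / g) / 2) u := by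
    have := (((hasDerivAt_const u (1:ℝ)).sub (hasDerivAt_sqrt_one_sub_sq h0 h1)).div_const 2)
    exact this.congr_deriv (by ring)
  have dbe := hasDerivAt_binEnt hq0 hq1
  have dphi := dbe.comp u dq
  have ephi : binEnt ∘ (fun x : ℝ => (1 - Real.sqrt (1 - x ^ 2)) / 2) = phi := rfl
  rw [ephi] at dphi
  refine dphi.congr_deriv ?_; symm
  -- show phiD u = (log(1-(1-g)/2) - log((1-g)/2))/log 2 * (-(-u/g)/2)
  have e1 : 1 - (1 - g) / 2 = (1 + g) / 2 := by ring
  rw [e1]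
  have hu2 : u ^ 2 = (1 - g) * (1 + g) := by nlinarith
  have hlogs : Real.log ((1 - g)) + Real.log (1 + g) = 2 * Real.log u := by
    rw [← Real.log_mul (by linarith : (1:ℝ) - g ≠ 0) (by linarith : (1:ℝ) + g ≠ 0), ← hu2,
      show u ^ 2 = u ^ (2:ℕ) from rfl, Real.log_pow]
    norm_num
  have hL2 : Real.log (1 - g) = 2 * Real.log u - Real.log (1 + g) := by linarith
  rw [Real.log_div (by linarith : (1:ℝ) + g ≠ 0) (two_ne_zero),
      Real.log_div (by linarith : (1:ℝ) - g ≠ 0) (two_ne_zero), hL2]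
  unfold phiD
  rw [← hgdef]
  have hlog2 : Real.log 2 ≠ 0 := ne_of_gt (Real.log_pos one_lt_two)
  field_simp
  ring

noncomputable def phiDD (u : ℝ) : ℝ :=
  (Real.log (1 + Real.sqrt (1 - u ^ 2)) - Real.log u - Real.sqrt (1 - u ^ 2)) /
    (Real.sqrt (1 - u ^ 2) ^ 3 * Real.log 2)

lemma hasDerivAt_phiD {u : ℝ} (h0 : 0 < u) (h1 : u < 1) :
    HasDerivAt phiD (phiDD u) u := by
  obtain ⟨hg, hg1, hg2⟩ := sqrt_facts h0 h1
  set g := Real.sqrt (1 - u ^ 2) with hgdef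
  have hgd : HasDerivAt (fun x : ℝ => Real.sqrt (1 - x ^ 2)) (-u / g) u :=
    hasDerivAt_sqrt_one_sub_sq h0 h1
  have d1 : HasDerivAt (fun x : ℝ => Real.log (1 + Real.sqrt (1 - x ^ 2)))
      ((-u / g) / (1 + g)) u := by
    have := ((hasDerivAt_const u (1:ℝ)).add hgd).log (by linarith : (1:ℝ) + g ≠ 0)
    simpa using this
  have dA : HasDerivAt (fun x : ℝ => Real.log (1 + Real.sqrt (1 - x ^ 2)) - Real.log x)
      ((-u / g) / (1 + g) - u⁻¹) u := d1.sub (Real.hasDerivAt_log h0.ne')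
  have dnum : HasDerivAt (fun x : ℝ => x * (Real.log (1 + Real.sqrt (1 - x ^ 2)) - Real.log x))
      (1 * (Real.log (1 + g) - Real.log u) + u * ((-u / g) / (1 + g) - u⁻¹)) u :=
    (hasDerivAt_id u).mul dA
  have dinv : HasDerivAt (fun x : ℝ => (Real.sqrt (1 - x ^ 2))⁻¹) (-(-u / g) / g ^ 2) u :=
    hgd.inv hg.ne'
  have dd := ((dnum.mul dinv).div_const (Real.log 2))
  have ephiD : (fun x : ℝ => x * (Real.log (1 + Real.sqrt (1 - x ^ 2)) - Real.log x) *
      (Real.sqrt (1 - x ^ 2))⁻¹ / Real.log 2) = phiD := rfl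
  refine dd.congr_deriv ?_
  symm
  unfold phiDD
  rw [← hgdef]
  have hlog2 : Real.log 2 ≠ 0 := ne_of_gt (Real.log_pos one_lt_two)
  have hu2 : u ^ 2 = (1 - g) * (1 + g) := by nlinarith
  field_simp
  ring_nf
  linear_combination
    (g - g * (Real.log (1 + g) - Real.log u) - (Real.log (1 + g) - Real.log u) +
      u * Real.log 2 * (g ^ 5 * (Real.log (1 + g) - Real.log u) +
        g ^ 6 * (Real.log (1 + g) - Real.log u) - g ^ 6) +
      (-(((Real.log (1 + g) - Real.log u) * (1 + g) - g) * g ^ 5 * u * Real.log 2))) * hg2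

lemma continuous_binEnt : Continuous binEnt := by
  have : binEnt = fun q => (-(q * Real.log q) - (1 - q) * Real.log (1 - q)) / Real.log 2 := by
    funext q; exact binEnt_eq q
  rw [this]
  apply Continuous.div_const
  apply Continuous.sub
  · exact Real.continuous_mul_log.neg
  · exact Real.continuous_mul_log.comp (continuous_const.sub continuous_id)

lemma continuous_phi : Continuous phi := by
  unfold phi
  apply continuous_binEnt.comp
  apply Continuous.div_const
  apply continuous_const.sub
  exact Real.continuous_sqrt.comp (continuous_const.sub (continuous_pow 2))

lemma phiDD_nonneg {u : ℝ} (h0 : 0 < u) (h1 : u < 1) : 0 ≤ phiDD u := by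
  obtain ⟨hg, hg1, hg2⟩ := sqrt_facts h0 h1
  set g := Real.sqrt (1 - u ^ 2) with hgdef
  unfold phiDD
  rw [← hgdef]
  have hu2 : u ^ 2 = (1 - g) * (1 + g) := by nlinarith
  have hlogs : Real.log (1 - g) + Real.log (1 + g) = 2 * Real.log u := by
    rw [← Real.log_mul (by linarith : (1:ℝ) - g ≠ 0) (by linarith : (1:ℝ) + g ≠ 0), ← hu2,
      show u ^ 2 = u ^ (2:ℕ) from rfl, Real.log_pow]
    norm_num
  have hart := two_mul_le_log_div hg.le hg1
  apply div_nonneg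
  · linarith
  · have := Real.log_pos one_lt_two
    positivity

lemma phi_convexOn : ConvexOn ℝ (Set.Icc (0:ℝ) 1) phi := by
  apply convexOn_of_hasDerivWithinAt2_nonneg (f' := phiD) (f'' := phiDD) (convex_Icc 0 1)
    continuous_phi.continuousOn
  · rw [interior_Icc]
    exact fun x hx => (hasDerivAt_phi hx.1 hx.2).hasDerivWithinAt
  · rw [interior_Icc]
    exact fun x hx => (hasDerivAt_phiD hx.1 hx.2).hasDerivWithinAt
  · rw [interior_Icc]
    exact fun x hx => phiDD_nonneg hx.1 hx.2

lemma binEnt_symm (q : ℝ) : binEnt (1 - q) = binEnt q := by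
  unfold binEnt
  rw [show (1:ℝ) - (1 - q) = q by ring]
  ring

lemma phi_Bh {q : ℝ} (h0 : 0 ≤ q) (h1 : q ≤ 1) : phi (Bh q) = binEnt q := by
  unfold phi Bh
  have hsq : (2 * Real.sqrt (q * (1 - q))) ^ 2 = 4 * (q * (1 - q)) := by
    rw [mul_pow, Real.sq_sqrt (by nlinarith)]
    ring
  rw [hsq, show 1 - 4 * (q * (1 - q)) = (1 - 2*q)^2 by ring, Real.sqrt_sq_eq_abs]
  rcases le_total q (1/2) with h | h
  · rw [abs_of_nonneg (by linarith), show (1 - (1 - 2*q))/2 = q by ring]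
  · rw [abs_of_nonpos (by linarith), show (1 - -(1 - 2*q))/2 = 1 - q by ring, binEnt_symm]

lemma Bh_mem {q : ℝ} (h0 : 0 ≤ q) (h1 : q ≤ 1) : Bh q ∈ Set.Icc (0:ℝ) 1 := by
  unfold Bh
  constructor
  · positivity
  · have h2 : q * (1 - q) ≤ (1/2)^2 := by nlinarith [sq_nonneg (q - 1/2)]
    have := Real.sqrt_le_sqrt h2
    rw [Real.sqrt_sq (by norm_num)] at this
    linarith

-- helper for the per-letter entropy identity
lemma half_term (a s : ℝ) (ha : 0 ≤ a) (hs : 0 < s) :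
    (1/2) * a * Real.logb 2 (a / (s/2)) = a/2 * Real.logb 2 (a/s) + a/2 := by
  rcases eq_or_lt_of_le ha with h | h
  · simp [← h]
  · have : a / (s/2) = 2 * (a/s) := by field_simp
    rw [this, Real.logb_mul (two_ne_zero) (by positivity : a/s ≠ 0), Real.logb_self_eq_one one_lt_two]
    ring

theorem one_sub_I_ge_phi_Z (W : Fin 2 → Y → ℝ)
    (hnn : ∀ x y, 0 ≤ W x y) (hsum : ∀ x, ∑ y, W x y = 1)
    (hpos : ∀ y, 0 < W 0 y + W 1 y) :
    phi (bhat W) ≤ 1 - symCap W := by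
  set P : Y → ℝ := fun y => (W 0 y + W 1 y) / 2 with hP
  set p : Y → ℝ := fun y => W 0 y / (W 0 y + W 1 y) with hp
  have hPpos : ∀ y, 0 < P y := fun y => by have := hpos y; simp only [hP]; linarith
  have hp01 : ∀ y, p y ∈ Set.Icc (0:ℝ) 1 := by
    intro y
    have := hpos y
    constructor
    · exact div_nonneg (hnn 0 y) this.le
    · rw [div_le_one this]; linarith [hnn 1 y]
  have hPsum : ∑ y, P y = 1 := by
    simp only [hP]
    rw [← Finset.sum_div, Finset.sum_add_distrib, hsum 0, hsum 1]
    norm_num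
  -- step 1: 1 - symCap = ∑ P y * binEnt (p y)
  have hsym : 1 - symCap W = ∑ y, P y * binEnt (p y) := by
    have hpoint : ∀ y, (∑ x : Fin 2,
        (1/2) * W x y * Real.logb 2 (W x y / ((1/2) * W 0 y + (1/2) * W 1 y)))
        = P y - P y * binEnt (p y) := by
      intro y
      have hs := hpos y
      have e0 : (1/2) * W 0 y + (1/2) * W 1 y = (W 0 y + W 1 y) / 2 := by ring
      rw [Fin.sum_univ_two, e0, half_term _ _ (hnn 0 y) hs, half_term _ _ (hnn 1 y) hs]
      have e1 : 1 - p y = W 1 y / (W 0 y + W 1 y) := by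
        rw [hp]; field_simp; ring
      unfold binEnt
      rw [e1]
      simp only [hP, hp]
      set a := W 0 y with ha
      set b := W 1 y with hb
      set l0 := Real.logb 2 (a / (a + b)) with hl0
      set l1 := Real.logb 2 (b / (a + b)) with hl1
      have hs' : a + b ≠ 0 := hs.ne'
      field_simp
      ring
    unfold symCap
    rw [Finset.sum_congr rfl (fun y _ => hpoint y), Finset.sum_sub_distrib, hPsum]
    ring
  -- step 2: bhat = ∑ P y * Bh (p y)
  have hbh : bhat W = ∑ y, P y * Bh (p y) := by
    unfold bhat
    apply Finset.sum_congr rfl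
    intro y _
    have hs := hpos y
    have e1 : 1 - p y = W 1 y / (W 0 y + W 1 y) := by rw [hp]; field_simp; ring
    unfold Bh
    rw [e1]
    simp only [hP, hp]
    set a := W 0 y with ha
    set b := W 1 y with hb
    have hab : 0 ≤ a * b := mul_nonneg (hnn 0 y) (hnn 1 y)
    have e2 : a / (a + b) * (b / (a + b)) = (a * b) / (a + b) ^ 2 := by
      rw [div_mul_div_comm, sq]
    rw [e2, Real.sqrt_div hab, Real.sqrt_sq hs.le]
    field_simp
    all_goals first | ring | exact Or.inl trivial
  -- step 3: Jensen
  have hmem : ∀ y ∈ (Finset.univ : Finset Y), Bh (p y) ∈ Set.Icc (0:ℝ) 1 :=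
    fun y _ => Bh_mem (hp01 y).1 (hp01 y).2
  have hJ := phi_convexOn.map_sum_le (t := Finset.univ) (w := P) (p := fun y => Bh (p y))
    (fun y _ => (hPpos y).le) hPsum hmem
  simp only [smul_eq_mul] at hJ
  rw [hsym, hbh]
  calc phi (∑ y, P y * Bh (p y)) ≤ ∑ y, P y * phi (Bh (p y)) := hJ
    _ = ∑ y, P y * binEnt (p y) := by
        apply Finset.sum_congr rfl
        intro y _
        rw [phi_Bh (hp01 y).1 (hp01 y).2]
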